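/- Let L(t) be a time-varying symmetric Laplacian matrix of a complete weighted graph whose weights satisfy a_{ij}(t) ≥ a > 0 for all t ≥ 0. Then any solution of δ̇ = −L(t)δ with 1ᵀδ(0) = 0 satisfies ‖δ(t)‖ ≤ ‖δ(0)‖·e^{−n·a·t}, where n is the dimension. -/

import Mathlib

open Real Finset Matrix

/-- Quadratic form bound for the Laplacian of a complete weighted graph:
if all off-diagonal weights are at least `a` and `d` sums to zero, then
`dᵀ L d ≥ n a ‖d‖²`. -/
lemma stmt_13_quad_aux (n : ℕ) (a : ℝ)
    (B : Matrix (Fin n) (Fin n) ℝ)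
    (hsymm : ∀ i j, B i j = B j i)
    (hw : ∀ i j, i ≠ j → a ≤ B i j)
    (d : Fin n → ℝ) (hS : ∑ i, d i = 0) :
    ((n : ℝ) * a) * ∑ i, d i ^ 2 ≤
      ∑ i, d i * ((Matrix.diagonal (fun i => ∑ j, B i j) - B).mulVec d i) := by
  have hswap : ∑ i, ∑ j, B i j * d j ^ 2 = ∑ i, ∑ j, B i j * d i ^ 2 := by
    rw [Finset.sum_comm]
    exact Finset.sum_congr rfl fun i _ => Finset.sum_congr rfl fun j _ => by rw [hsymm]
  have key : ∑ i, d i * ((Matrix.diagonal (fun i => ∑ j, B i j) - B).mulVec d i)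
      = (1/2) * ∑ i, ∑ j, B i j * (d i - d j)^2 := by
    have h1 : ∀ i, d i * ((Matrix.diagonal (fun i => ∑ j, B i j) - B).mulVec d i)
        = (∑ j, B i j * d i ^ 2) - ∑ j, B i j * (d i * d j) := by
      intro i
      simp only [Matrix.mulVec, dotProduct, Matrix.sub_apply, Matrix.diagonal,
        Matrix.of_apply, sub_mul, Finset.sum_sub_distrib]
      have h2 : ∑ j, (if i = j then ∑ k, B i k else 0) * d j = (∑ k, B i k) * d i := by
        rw [Finset.sum_eq_single i]
        · simp
        · intro b _ hb; simp [Ne.symm hb]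
        · simp
      have e2 : ∑ j, d i * (B i j * d j) = ∑ j, B i j * (d i * d j) :=
        Finset.sum_congr rfl fun j _ => by ring
      rw [h2, mul_sub, Finset.mul_sum, e2, ← Finset.sum_mul]
      ring
    have h3 : ∀ i j, B i j * (d i - d j)^2
        = B i j * d i ^ 2 + B i j * d j ^ 2 - 2 * (B i j * (d i * d j)) := by
      intro i j; ring
    simp only [h1, h3, Finset.sum_add_distrib, Finset.sum_sub_distrib, ← Finset.mul_sum,
      hswap]
    ring
  rw [key]
  have hge : ∑ i, ∑ j, a * (d i - d j)^2 ≤ ∑ i, ∑ j, B i j * (d i - d j)^2 := by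
    refine Finset.sum_le_sum fun i _ => Finset.sum_le_sum fun j _ => ?_
    rcases eq_or_ne i j with rfl | hij
    · simp
    · exact mul_le_mul_of_nonneg_right (hw i j hij) (sq_nonneg _)
  have hid : ∑ i, ∑ j, a * (d i - d j)^2 = 2 * ((n:ℝ) * a) * ∑ i, d i ^ 2 := by
    have h4 : ∀ i j, a * (d i - d j)^2
        = a * d i ^ 2 + a * d j ^ 2 - 2 * a * (d i * d j) := by intro i j; ring
    simp only [h4, Finset.sum_add_distrib, Finset.sum_sub_distrib, ← Finset.mul_sum,
      Finset.sum_const, Finset.card_univ, Fintype.card_fin, nsmul_eq_mul, hS,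
      mul_zero, Finset.sum_const_zero]
    ring
  linarith

/-- For the time-varying consensus dynamics `δ̇ = −L(t) δ`, where `L(t)` is the
Laplacian of a complete weighted graph with weights `aᵢⱼ(t) ≥ a > 0`, any
solution orthogonal to the all-ones vector decays as
`‖δ(t)‖ ≤ ‖δ(0)‖ e^{−n a t}`. -/
theorem stmt_13 (n : ℕ) (hn : 2 ≤ n) (a : ℝ) (ha : 0 < a)
    (A : ℝ → Matrix (Fin n) (Fin n) ℝ)
    (hsymm : ∀ t i j, A t i j = A t j i)
    (hdiag : ∀ t i, A t i i = 0)
    (hw : ∀ t, 0 ≤ t → ∀ i j, i ≠ j → a ≤ A t i j)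
    (L : ℝ → Matrix (Fin n) (Fin n) ℝ)
    (hL : ∀ t, L t = Matrix.diagonal (fun i => ∑ j, A t i j) - A t)
    (δ : ℝ → Fin n → ℝ)
    (hsum : ∑ i, δ 0 i = 0)
    (hderiv : ∀ t i, HasDerivAt (fun s => δ s i) (-((L t).mulVec (δ t) i)) t) :
    ∀ t, 0 ≤ t →
      Real.sqrt (∑ i, δ t i ^ 2) ≤
        Real.sqrt (∑ i, δ 0 i ^ 2) * Real.exp (-(n * a) * t) := by
  set c : ℝ := (n : ℝ) * a with hc
  set V : ℝ → ℝ := fun s => ∑ i, δ s i ^ 2 with hVdef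
  set Q : ℝ → ℝ := fun s => ∑ i, δ s i * (L s).mulVec (δ s) i with hQdef
  -- column sums of L vanish
  have hcol : ∀ t j, ∑ i, L t i j = 0 := by
    intro t j
    simp only [hL, Matrix.sub_apply, Finset.sum_sub_distrib]
    have h1 : ∑ i, Matrix.diagonal (fun i => ∑ k, A t i k) i j = ∑ k, A t j k := by
      simp [Matrix.diagonal, Finset.sum_ite_eq]
    have h2 : ∑ i, A t i j = ∑ k, A t j k :=
      Finset.sum_congr rfl fun i _ => hsymm t i j
    rw [h1, h2]; ring
  -- the sum of the components is invariant, hence always zero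
  have hS : ∀ t, ∑ i, δ t i = 0 := by
    have hder : ∀ t, HasDerivAt (fun s => ∑ i, δ s i) 0 t := by
      intro t
      have h : HasDerivAt (fun s => ∑ i, δ s i) (∑ i, -((L t).mulVec (δ t) i)) t :=
        HasDerivAt.fun_sum (fun i (_ : i ∈ Finset.univ) => hderiv t i)
      convert h using 1
      simp only [Matrix.mulVec, dotProduct]
      rw [Finset.sum_neg_distrib, Finset.sum_comm]
      have : ∀ j, ∑ i, L t i j * δ t j = 0 := fun j => by
        rw [← Finset.sum_mul, hcol, zero_mul]
      simp [this]
    intro t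
    have := is_const_of_deriv_eq_zero (f := fun s => ∑ i, δ s i)
      (fun x => (hder x).differentiableAt) (fun x => (hder x).deriv) t 0
    simpa [hsum] using this
  -- quadratic form bound
  have hQ : ∀ t, 0 ≤ t → c * V t ≤ Q t := by
    intro t ht
    have := stmt_13_quad_aux n a (A t) (hsymm t) (hw t ht) (δ t) (hS t)
    simpa [hQdef, hVdef, hc, ← hL t] using this
  -- derivative of V
  have hV' : ∀ t, HasDerivAt V (-2 * Q t) t := by
    intro t
    have h : HasDerivAt (fun s => ∑ i, δ s i ^ 2)
        (∑ i, ((2 : ℕ) : ℝ) * δ t i ^ (2 - 1) * -((L t).mulVec (δ t) i)) t :=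
      HasDerivAt.fun_sum (fun i (_ : i ∈ Finset.univ) => (hderiv t i).pow 2)
    convert h using 1
    simp only [hQdef, Finset.mul_sum]
    exact Finset.sum_congr rfl fun i _ => by push_cast; ring
  -- the Lyapunov function with exponential weight
  set W : ℝ → ℝ := fun s => V s * Real.exp (2 * c * s) with hWdef
  have hW' : ∀ t, HasDerivAt W
      ((-2 * Q t) * Real.exp (2 * c * t) + V t * (Real.exp (2 * c * t) * (2 * c * 1))) t := by
    intro t
    exact (hV' t).mul (((hasDerivAt_id t).const_mul (2 * c)).exp)
  have hanti : AntitoneOn W (Set.Ici (0 : ℝ)) := by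
    apply antitoneOn_of_deriv_nonpos (convex_Ici 0)
    · exact (continuous_iff_continuousAt.mpr fun x => (hW' x).continuousAt).continuousOn
    · intro x _
      exact (hW' x).differentiableAt.differentiableWithinAt
    · intro x hx
      rw [interior_Ici] at hx
      rw [(hW' x).deriv]
      have hE : 0 < Real.exp (2 * c * x) := Real.exp_pos _
      have hQx := hQ x hx.le
      nlinarith [hQx, hE]
  intro t ht
  have hVnn : 0 ≤ V t := Finset.sum_nonneg fun i _ => sq_nonneg _
  have hV0nn : 0 ≤ V 0 := Finset.sum_nonneg fun i _ => sq_nonneg _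
  have h1 : W t ≤ W 0 := hanti Set.self_mem_Ici ht ht
  have h2 : W 0 = V 0 := by simp [hWdef]
  have hE : (0 : ℝ) < Real.exp (2 * c * t) := Real.exp_pos _
  have hVle : V t ≤ V 0 * Real.exp (-(2 * c) * t) := by
    have h3 : V t * Real.exp (2 * c * t) ≤ V 0 := h2 ▸ h1
    have h4 : V t ≤ V 0 / Real.exp (2 * c * t) := (le_div_iff₀ hE).mpr h3
    calc V t ≤ V 0 / Real.exp (2 * c * t) := h4
      _ = V 0 * Real.exp (-(2 * c) * t) := by
          rw [show -(2 * c) * t = -(2 * c * t) by ring, Real.exp_neg, div_eq_mul_inv]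
  have hsqrt := Real.sqrt_le_sqrt hVle
  have hexp : Real.exp (-(2 * c) * t) = (Real.exp (-c * t)) ^ 2 := by
    rw [sq, ← Real.exp_add]; ring_nf
  calc Real.sqrt (∑ i, δ t i ^ 2) = Real.sqrt (V t) := rfl
    _ ≤ Real.sqrt (V 0 * Real.exp (-(2 * c) * t)) := hsqrt
    _ = Real.sqrt (V 0) * Real.exp (-c * t) := by
        rw [Real.sqrt_mul hV0nn, hexp, Real.sqrt_sq (Real.exp_nonneg _)]
    _ = Real.sqrt (∑ i, δ 0 i ^ 2) * Real.exp (-((n : ℝ) * a) * t) := by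
        rw [hc]
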